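/- Let q = φ(X)/X = ((1+X)^p − 1)/X ∈ ℤ_p[[X]]. For every ℓ ≥ 1, ψ(q^ℓ) is a polynomial in X of degree ≤ ℓ − 1 whose constant term is p^{ℓ−1}. -/

import Mathlib

open PowerSeries


lemma count_div (p n : ℕ) [hp : Fact p.Prime] :
    ((Fintype.piFinset fun _ : Fin (n+1) => Finset.range p).filter
      (fun g => p ∣ ∑ i, g i)).card = p ^ n := by
  haveI : NeZero p := ⟨hp.out.ne_zero⟩
  have hcard : (Fintype.piFinset fun _ : Fin n => Finset.range p).card = p ^ n := by
    simp [Fintype.card_piFinset]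
  rw [← hcard]
  apply Finset.card_nbij' (fun g => Fin.init g)
      (fun h => Fin.snoc h ((-(∑ i, ((h i : ℕ) : ZMod p))).val))
  · intro g hg
    simp only [Finset.mem_coe, Finset.mem_filter, Fintype.mem_piFinset,
      Finset.mem_range] at hg ⊢
    intro i; exact hg.1 _
  · intro h hh
    simp only [Finset.mem_coe, Fintype.mem_piFinset, Finset.mem_range] at hh
    simp only [Finset.mem_coe, Finset.mem_filter, Fintype.mem_piFinset, Finset.mem_range]
    refine ⟨?_, ?_⟩
    · intro i
      induction i using Fin.lastCases with
      | last => rw [Fin.snoc_last]; exact ZMod.val_lt _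
      | cast i => rw [Fin.snoc_castSucc]; exact hh i
    · rw [← ZMod.natCast_eq_zero_iff, Fin.sum_univ_castSucc]
      push_cast
      simp only [Fin.snoc_castSucc, Fin.snoc_last, ZMod.natCast_zmod_val]
      ring
  · intro g hg
    simp only [Finset.mem_coe, Finset.mem_filter, Fintype.mem_piFinset,
      Finset.mem_range] at hg
    have hsum : (∑ i : Fin (n+1), (g i : ZMod p)) = 0 := by
      rw [← Nat.cast_sum, ZMod.natCast_eq_zero_iff]; exact hg.2
    rw [Fin.sum_univ_castSucc] at hsum
    have hlast : ((-(∑ i, ((Fin.init g i : ℕ) : ZMod p))).val) = g (Fin.last n) := by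
      have h2 : (-(∑ i, ((Fin.init g i : ℕ) : ZMod p))) = (g (Fin.last n) : ZMod p) :=
        neg_eq_of_add_eq_zero_right hsum
      rw [h2, ZMod.val_natCast_of_lt (hg.1 _)]
    dsimp only; rw [hlast]
    exact Fin.snoc_init_self g
  · intro h hh
    exact Fin.init_snoc _ _

lemma coeff_one_add_X_pow_eq_zero {R : Type*} [CommRing R] {k m : ℕ} (h : k < m) :
    PowerSeries.coeff (R := R) m ((1 + PowerSeries.X) ^ k) = 0 := by
  have hc : (((1 + Polynomial.X : Polynomial R) ^ k : Polynomial R) : PowerSeries R)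
      = (1 + PowerSeries.X) ^ k := by
    push_cast
    rfl
  rw [← hc, Polynomial.coeff_coe]
  apply Polynomial.coeff_eq_zero_of_natDegree_lt
  calc ((1 + Polynomial.X : Polynomial R) ^ k).natDegree
      ≤ k * (1 + Polynomial.X : Polynomial R).natDegree := Polynomial.natDegree_pow_le
    _ ≤ k * 1 := by
        gcongr
        exact le_trans (Polynomial.natDegree_add_le _ _) (by simp [Polynomial.natDegree_X_le])
    _ < m := by omega

variable (p : ℕ) [Fact p.Prime]

/-- The element `q = φ(X)/X = ((1+X)^p - 1)/X = 1 + (1+X) + ⋯ + (1+X)^{p-1}` of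
`ℤ_p[[X]]`. -/
noncomputable def qElt : PowerSeries ℤ_[p] :=
  ∑ i ∈ Finset.range p, (1 + PowerSeries.X) ^ i

/-- For `ℓ ≥ 1`, `ψ(q^ℓ)` is a polynomial in `X` of degree `≤ ℓ - 1` with constant term
`p^{ℓ-1}`. Here `ψ` is the (‵ℤ_p`-linear) left inverse of `φ : f(X) ↦ f((1+X)^p - 1)`,
characterized on the powers of `1+X` by `ψ((1+X)^i) = (1+X)^{i/p}` if `p ∣ i` and `0`
otherwise. (The first clause records that `X q = (1+X)^p - 1`, i.e. `q = φ(X)/X`.) -/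
theorem psi_q_pow {ℓ : ℕ} (hℓ : 1 ≤ ℓ)
    (ψ : PowerSeries ℤ_[p] →ₗ[ℤ_[p]] PowerSeries ℤ_[p])
    (hψ : ∀ i : ℕ, ψ ((1 + PowerSeries.X) ^ i) =
      if p ∣ i then (1 + PowerSeries.X) ^ (i / p) else 0) :
    (PowerSeries.X * qElt p = (1 + PowerSeries.X) ^ p - 1) ∧
    (∀ m : ℕ, ℓ - 1 < m → PowerSeries.coeff (R := ℤ_[p]) m (ψ (qElt p ^ ℓ)) = 0) ∧
    PowerSeries.constantCoeff (R := ℤ_[p]) (ψ (qElt p ^ ℓ)) = (p : ℤ_[p]) ^ (ℓ - 1) := by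
  obtain ⟨n, rfl⟩ : ∃ n, ℓ = n + 1 := ⟨ℓ - 1, (Nat.succ_pred_eq_of_pos hℓ).symm⟩
  have hp : 0 < p := (Fact.out : p.Prime).pos
  -- expansion of q^ℓ
  have hexp : qElt p ^ (n + 1) =
      ∑ g ∈ Fintype.piFinset (fun _ : Fin (n+1) => Finset.range p),
        (1 + PowerSeries.X) ^ (∑ i, g i) := by
    have h1 : qElt p ^ (n + 1) = ∏ _i : Fin (n+1), qElt p := by
      rw [Finset.prod_const, Finset.card_univ, Fintype.card_fin]
    rw [h1]
    unfold qElt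
    rw [Finset.prod_univ_sum]
    exact Finset.sum_congr rfl fun g _ => Finset.prod_pow_eq_pow_sum _ _ _
  have hψq : ψ (qElt p ^ (n + 1)) =
      ∑ g ∈ Fintype.piFinset (fun _ : Fin (n+1) => Finset.range p),
        if p ∣ ∑ i, g i then (1 + PowerSeries.X) ^ ((∑ i, g i) / p) else 0 := by
    rw [hexp, map_sum]
    exact Finset.sum_congr rfl fun g _ => hψ _
  have hdivlt : ∀ g ∈ Fintype.piFinset (fun _ : Fin (n+1) => Finset.range p),
      (∑ i, g i) / p ≤ n := by
    intro g hg
    simp only [Fintype.mem_piFinset, Finset.mem_range] at hg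
    have hsle : (∑ i, g i) ≤ (n + 1) * (p - 1) := by
      calc (∑ i, g i) ≤ ∑ _i : Fin (n+1), (p - 1) :=
            Finset.sum_le_sum fun i _ => Nat.le_pred_of_lt (hg i)
        _ = (n + 1) * (p - 1) := by simp [Finset.sum_const, mul_comm]
    have hlt : (∑ i, g i) < (n + 1) * p :=
      lt_of_le_of_lt hsle (Nat.mul_lt_mul_of_pos_left (Nat.sub_lt hp one_pos) (Nat.succ_pos n))
    exact Nat.lt_succ_iff.mp ((Nat.div_lt_iff_lt_mul hp).mpr hlt)
  refine ⟨?_, ?_, ?_⟩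
  · -- X * q = (1+X)^p - 1
    have := geom_sum_mul (1 + PowerSeries.X : PowerSeries ℤ_[p]) p
    simp only [add_sub_cancel_left] at this
    rw [mul_comm]
    exact this
  · intro m hm
    rw [hψq, map_sum]
    apply Finset.sum_eq_zero
    intro g hg
    split
    · exact coeff_one_add_X_pow_eq_zero (lt_of_le_of_lt (hdivlt g hg) (by omega))
    · simp
  · rw [hψq, map_sum]
    have : ∀ g ∈ Fintype.piFinset (fun _ : Fin (n+1) => Finset.range p),
        PowerSeries.constantCoeff (R := ℤ_[p])
          (if p ∣ ∑ i, g i then (1 + PowerSeries.X : PowerSeries ℤ_[p]) ^ ((∑ i, g i) / p) else 0)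
          = if p ∣ ∑ i, g i then 1 else 0 := by
      intro g _
      split <;> simp
    rw [Finset.sum_congr rfl this, Finset.sum_boole, count_div p n]
    push_cast
    simp
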